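/- arXiv:2504.04165 — 2 statements merged into one kernel-verified Lean document; each statement's English description precedes it below -/
import Mathlib

section
/- Let B ∈ C² with B(y) ≠ 0 for all y ∈ ℝ³ and with minimal growth of order γ ≥ 0 at infinity, and fix x₀, v₀ ∈ ℝ³. Then there exists a constant C > 0, independent of t and ω, such that for all t ≥ 0 and all ω > 0 the integrated perpendicular velocity satisfies |∫₀ᵗ [v_ω(s) − (v_ω(s)·b(x_ω(s))) b(x_ω(s))] ds| ≤ (C/ω)(1 + t^{2γ+1}). -/
noncomputable section

open Real Filter Topology MeasureTheory intervalIntegral Bornology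

abbrev E3 : Type := EuclideanSpace ℝ (Fin 3)

def cross3 (u v : E3) : E3 :=
  (WithLp.equiv 2 (Fin 3 → ℝ)).symm
    ![u 1 * v 2 - u 2 * v 1, u 2 * v 0 - u 0 * v 2, u 0 * v 1 - u 1 * v 0]

def divg (F : E3 → E3) (y : E3) : ℝ :=
  ∑ i : Fin 3, fderiv ℝ F y (EuclideanSpace.single i (1:ℝ)) i

def curl3 (F : E3 → E3) (y : E3) : E3 :=
  (WithLp.equiv 2 (Fin 3 → ℝ)).symm
    ![fderiv ℝ F y (EuclideanSpace.single 1 (1:ℝ)) 2 - fderiv ℝ F y (EuclideanSpace.single 2 (1:ℝ)) 1,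
      fderiv ℝ F y (EuclideanSpace.single 2 (1:ℝ)) 0 - fderiv ℝ F y (EuclideanSpace.single 0 (1:ℝ)) 2,
      fderiv ℝ F y (EuclideanSpace.single 0 (1:ℝ)) 1 - fderiv ℝ F y (EuclideanSpace.single 1 (1:ℝ)) 0]

def bdir (B : E3 → E3) (y : E3) : E3 := ‖B y‖⁻¹ • B y

def IsLorentzSol (B : E3 → E3) (ω : ℝ) (x₀ v₀ : E3) (x : ℝ → E3) : Prop :=
  x 0 = x₀ ∧ deriv x 0 = v₀ ∧ Differentiable ℝ x ∧
    ∀ t : ℝ, HasDerivAt (deriv x) (ω • cross3 (deriv x t) (B (x t))) t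

def IsLimitSol (B : E3 → E3) (x₀ v₀ : E3) (x : ℝ → E3) (h : ℝ → ℝ) : Prop :=
  x 0 = x₀ ∧ h 0 = (inner ℝ v₀ (bdir B x₀) : ℝ) ∧
    (∀ t : ℝ, HasDerivAt x (h t • bdir B (x t)) t) ∧
    (∀ t : ℝ, HasDerivAt h ((‖v₀‖ ^ 2 - h t ^ 2) / 2 * divg (bdir B) (x t)) t)

def IsCkBounded (k : ℕ) (B : E3 → E3) : Prop :=
  ContDiff ℝ k B ∧ ∀ i ≤ k, ∃ M : ℝ, ∀ y : E3, ‖iteratedFDeriv ℝ i B y‖ ≤ M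

def MinimalGrowth (γ : ℝ) (B : E3 → E3) : Prop :=
  ∃ R C : ℝ, 0 < R ∧ 0 < C ∧ ∀ y : E3, R ≤ ‖y‖ → C / ‖y‖ ^ γ ≤ ‖B y‖

/-! ### Auxiliary lemmas -/

lemma e3_ext {a b : E3} (h : ∀ i, a i = b i) : a = b := PiLp.ext h

lemma norm_sq_e3 (w : E3) : ‖w‖^2 = w 0^2 + w 1^2 + w 2^2 := by
  rw [EuclideanSpace.norm_eq, Real.sq_sqrt (by positivity)]
  simp [Fin.sum_univ_three, sq_abs]

lemma cross3_add_left (a b v : E3) : cross3 (a + b) v = cross3 a v + cross3 b v := by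
  apply e3_ext; intro i; fin_cases i <;>
    simp [cross3, PiLp.add_apply] <;> ring

lemma cross3_smul_left (c : ℝ) (a v : E3) : cross3 (c • a) v = c • cross3 a v := by
  apply e3_ext; intro i; fin_cases i <;>
    simp [cross3, PiLp.smul_apply, smul_eq_mul] <;> ring

lemma cross3_add_right (a u v : E3) : cross3 a (u + v) = cross3 a u + cross3 a v := by
  apply e3_ext; intro i; fin_cases i <;>
    simp [cross3, PiLp.add_apply] <;> ring

lemma cross3_smul_right (c : ℝ) (a v : E3) : cross3 a (c • v) = c • cross3 a v := by
  apply e3_ext; intro i; fin_cases i <;>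
    simp [cross3, PiLp.smul_apply, smul_eq_mul] <;> ring

lemma inner_cross3_self (v w : E3) : (inner ℝ (cross3 v w) v : ℝ) = 0 := by
  simp [cross3, PiLp.inner_apply, Fin.sum_univ_three]; ring

lemma inner_self_cross3 (v w : E3) : (inner ℝ v (cross3 v w) : ℝ) = 0 := by
  simp [cross3, PiLp.inner_apply, Fin.sum_univ_three]; ring

lemma norm_cross3_le (u v : E3) : ‖cross3 u v‖ ≤ ‖u‖ * ‖v‖ := by
  refine le_of_pow_le_pow_left₀ two_ne_zero (by positivity) ?_
  rw [mul_pow, norm_sq_e3, norm_sq_e3, norm_sq_e3]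
  simp only [cross3, WithLp.equiv_symm_apply, PiLp.toLp_apply, Matrix.cons_val_zero, Matrix.cons_val_one,
    Matrix.head_cons, Matrix.cons_val_two, Matrix.tail_cons]
  nlinarith [sq_nonneg (u 0 * v 0 + u 1 * v 1 + u 2 * v 2)]

def crossL : E3 →ₗ[ℝ] E3 →ₗ[ℝ] E3 :=
  LinearMap.mk₂ ℝ cross3 cross3_add_left cross3_smul_left cross3_add_right cross3_smul_right

def crossCLM : E3 →L[ℝ] E3 →L[ℝ] E3 :=
  LinearMap.mkContinuous₂ crossL 1 (fun u v => by
    rw [one_mul]; exact norm_cross3_le u v)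

@[simp] lemma crossCLM_apply (u v : E3) : crossCLM u v = cross3 u v := rfl

lemma perp_eq_cross (B : E3 → E3) (y v : E3) (hy : B y ≠ 0) :
    v - (inner ℝ v (bdir B y) : ℝ) • bdir B y
      = cross3 (((inner ℝ (B y) (B y) : ℝ))⁻¹ • B y) (cross3 v (B y)) := by
  set b := B y with hb
  have hn : ‖b‖ ≠ 0 := norm_ne_zero_iff.mpr hy
  have hn2 : b 0^2 + b 1^2 + b 2^2 = ‖b‖^2 := (norm_sq_e3 b).symm
  have hib : (inner ℝ b b : ℝ) = ‖b‖^2 := real_inner_self_eq_norm_sq b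
  rw [hib]
  apply e3_ext; intro i; fin_cases i <;>
    simp only [Fin.reduceFinMk, bdir, ← hb, cross3, WithLp.equiv_symm_apply, PiLp.toLp_apply, PiLp.sub_apply,
        PiLp.smul_apply, PiLp.inner_apply, RCLike.inner_apply, conj_trivial,
        Fin.sum_univ_three, smul_eq_mul, Matrix.cons_val_zero, Matrix.cons_val_one,
        Matrix.head_cons, Matrix.cons_val_two, Matrix.tail_cons, Fin.isValue] <;>
    field_simp
  · linear_combination (-v 0) * hn2
  · linear_combination (-v 1) * hn2
  · linear_combination (-v 2) * hn2

lemma rpow_helper {γ t : ℝ} (hγ : 0 ≤ γ) (ht : 0 ≤ t) :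
    (1 + t) ^ (2*γ+1) ≤ 2 ^ (2*γ+1) * (1 + t ^ (2*γ+1)) := by
  have hp : (0:ℝ) ≤ 2*γ+1 := by linarith
  rcases le_total t 1 with h | h
  · have h1 : (1+t) ^ (2*γ+1) ≤ (2:ℝ) ^ (2*γ+1) :=
      Real.rpow_le_rpow (by linarith) (by linarith) hp
    have h2 : (0:ℝ) ≤ t ^ (2*γ+1) := Real.rpow_nonneg ht _
    nlinarith [Real.rpow_nonneg (by norm_num : (0:ℝ) ≤ 2) (2*γ+1)]
  · have h1 : (1+t) ^ (2*γ+1) ≤ (2*t) ^ (2*γ+1) :=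
      Real.rpow_le_rpow (by linarith) (by linarith) hp
    rw [Real.mul_rpow (by norm_num) ht] at h1
    have h2 : (0:ℝ) ≤ (2:ℝ) ^ (2*γ+1) := Real.rpow_nonneg (by norm_num) _
    nlinarith [Real.rpow_nonneg ht (2*γ+1)]

set_option maxHeartbeats 1000000 in
theorem integrated_perpendicular_velocity_bound
    (B : E3 → E3) (hB : IsCkBounded 2 B) (hB0 : ∀ y : E3, B y ≠ 0)
    (γ : ℝ) (hγ : 0 ≤ γ) (hgrowth : MinimalGrowth γ B) (x₀ v₀ : E3)
    (xω : ℝ → ℝ → E3) (hxω : ∀ ω : ℝ, 0 < ω → IsLorentzSol B ω x₀ v₀ (xω ω)) :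
    ∃ C > (0:ℝ), ∀ t ≥ (0:ℝ), ∀ ω > (0:ℝ),
      ‖∫ s in (0:ℝ)..t,
          (deriv (xω ω) s
            - (inner ℝ (deriv (xω ω) s) (bdir B (xω ω s)) : ℝ) • bdir B (xω ω s))‖
        ≤ C / ω * (1 + t ^ (2 * γ + 1)) := by
  obtain ⟨hB2, hBd⟩ := hB
  have hB1 : ContDiff ℝ 1 B := hB2.of_le (by norm_num)
  have hBdiff : Differentiable ℝ B := hB1.differentiable (by norm_num)
  -- bound on fderiv B
  obtain ⟨M1, hM1⟩ := hBd 1 (by norm_num)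
  have hM1' : ∀ y : E3, ‖fderiv ℝ B y‖ ≤ M1 := by
    intro y
    have h := hM1 y
    rwa [← norm_iteratedFDeriv_fderiv, norm_iteratedFDeriv_zero] at h
  have hM1pos : 0 ≤ M1 := le_trans (norm_nonneg _) (hM1' 0)
  -- bound on ‖B y‖⁻¹
  obtain ⟨R, Cg, hR, hCg, hgr⟩ := hgrowth
  have hBnorm_pos : ∀ y : E3, 0 < ‖B y‖ := fun y => norm_pos_iff.mpr (hB0 y)
  obtain ⟨M0, hM0⟩ := (isCompact_closedBall (0:E3) R).exists_bound_of_continuousOn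
    ((hB2.continuous.norm.inv₀ (fun y => (hBnorm_pos y).ne')).continuousOn)
  have hM0pos : 0 ≤ M0 := by
    have := hM0 0 (Metric.mem_closedBall_self hR.le)
    exact le_trans (norm_nonneg _) this
  obtain ⟨c0, hc0def⟩ : ∃ c0 : ℝ, c0 = max M0 (1/Cg) + 1 := ⟨_, rfl⟩
  have hc0pos : 0 < c0 := by
    have : (0:ℝ) ≤ max M0 (1/Cg) := le_trans hM0pos (le_max_left _ _)
    rw [hc0def]; linarith
  have hinv : ∀ y : E3, ‖B y‖⁻¹ ≤ c0 * (1 + ‖y‖ ^ γ) := by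
    intro y
    have hyγ : (0:ℝ) ≤ ‖y‖ ^ γ := Real.rpow_nonneg (norm_nonneg _) _
    rcases le_total ‖y‖ R with h | h
    · have h1 : ‖B y‖⁻¹ ≤ M0 := by
        simpa using hM0 y (by simpa [Metric.mem_closedBall, dist_zero_right] using h)
      have h2 : M0 ≤ c0 - 1 := by
        rw [hc0def, add_sub_cancel_right]; exact le_max_left _ _
      have e4 : c0 ≤ c0 * (1 + ‖y‖ ^ γ) := le_mul_of_one_le_right hc0pos.le (by linarith)
      calc ‖B y‖⁻¹ ≤ M0 := h1
        _ ≤ c0 - 1 := h2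
        _ ≤ c0 := by linarith
        _ ≤ c0 * (1 + ‖y‖ ^ γ) := e4
    · have hyR : 0 < ‖y‖ := lt_of_lt_of_le hR h
      have hyγpos : 0 < ‖y‖ ^ γ := Real.rpow_pos_of_pos hyR _
      have h1 : Cg / ‖y‖ ^ γ ≤ ‖B y‖ := hgr y h
      have h2 : ‖B y‖⁻¹ ≤ ‖y‖ ^ γ / Cg := by
        have h3 : (0:ℝ) < Cg / ‖y‖ ^ γ := by positivity
        have h4 := (inv_le_inv₀ (hBnorm_pos y) h3).mpr h1
        rwa [inv_div] at h4
      have h5 : 1/Cg ≤ c0 - 1 := by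
        rw [hc0def, add_sub_cancel_right]; exact le_max_right _ _
      have h6 : ‖y‖ ^ γ / Cg = (1/Cg) * ‖y‖ ^ γ := by ring
      have e1 : (1/Cg) * ‖y‖ ^ γ ≤ (c0 - 1) * ‖y‖ ^ γ :=
        mul_le_mul_of_nonneg_right h5 hyγ
      have e2 : (c0 - 1) * ‖y‖ ^ γ = c0 * ‖y‖ ^ γ - ‖y‖ ^ γ := by ring
      have e3 : c0 * (1 + ‖y‖ ^ γ) = c0 + c0 * ‖y‖ ^ γ := by ring
      have e4 : ‖y‖ ^ γ / Cg ≤ (1/Cg) * ‖y‖ ^ γ := le_of_eq (by ring)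
      linarith
  -- the auxiliary field G
  set G : E3 → E3 := fun y => ((inner ℝ (B y) (B y) : ℝ))⁻¹ • B y with hGdef
  have hinner_eq : ∀ y : E3, (inner ℝ (B y) (B y) : ℝ) = ‖B y‖^2 :=
    fun y => real_inner_self_eq_norm_sq _
  have hinner_ne : ∀ y : E3, (inner ℝ (B y) (B y) : ℝ) ≠ 0 := by
    intro y; rw [hinner_eq]
    have := hBnorm_pos y; positivity
  have hGnorm : ∀ y : E3, ‖G y‖ = ‖B y‖⁻¹ := by
    intro y
    have hb := hBnorm_pos y
    simp only [hGdef, norm_smul, Real.norm_eq_abs, hinner_eq,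
      abs_of_nonneg (by positivity : (0:ℝ) ≤ (‖B y‖^2)⁻¹)]
    rw [sq]
    field_simp
  have hGcd : ContDiff ℝ 1 G := ((hB1.inner ℝ hB1).inv hinner_ne).smul hB1
  have hGdiff : Differentiable ℝ G := hGcd.differentiable one_ne_zero
  have hfderivG_cont : Continuous (fderiv ℝ G) := hGcd.continuous_fderiv one_ne_zero
  -- bound on fderiv G
  have hDG : ∀ y : E3, ‖fderiv ℝ G y‖ ≤ 3 * M1 * (c0 * (1 + ‖y‖ ^ γ))^2 := by
    intro y
    have hφ : HasFDerivAt (fun z => (inner ℝ (B z) (B z) : ℝ))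
        ((fderivInnerCLM ℝ (B y, B y)).comp ((fderiv ℝ B y).prod (fderiv ℝ B y))) y :=
      (hBdiff y).hasFDerivAt.inner ℝ (hBdiff y).hasFDerivAt
    have hDφ_bound : ‖(fderivInnerCLM ℝ (B y, B y)).comp
        ((fderiv ℝ B y).prod (fderiv ℝ B y))‖ ≤ 2 * M1 * ‖B y‖ := by
      apply ContinuousLinearMap.opNorm_le_bound _ (by positivity)
      intro h
      rw [ContinuousLinearMap.comp_apply, ContinuousLinearMap.prod_apply, fderivInnerCLM_apply]
      have hb1 : ‖fderiv ℝ B y h‖ ≤ M1 * ‖h‖ :=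
        le_trans (ContinuousLinearMap.le_opNorm _ _)
          (mul_le_mul_of_nonneg_right (hM1' y) (norm_nonneg _))
      calc ‖(inner ℝ (B y) (fderiv ℝ B y h) : ℝ) + (inner ℝ (fderiv ℝ B y h) (B y) : ℝ)‖
          ≤ ‖(inner ℝ (B y) (fderiv ℝ B y h) : ℝ)‖ + ‖(inner ℝ (fderiv ℝ B y h) (B y) : ℝ)‖ :=
            norm_add_le _ _
        _ ≤ ‖B y‖ * ‖fderiv ℝ B y h‖ + ‖fderiv ℝ B y h‖ * ‖B y‖ := by
            gcongr <;> exact norm_inner_le_norm _ _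
        _ ≤ ‖B y‖ * (M1 * ‖h‖) + (M1 * ‖h‖) * ‖B y‖ := by gcongr
        _ = 2 * M1 * ‖B y‖ * ‖h‖ := by ring
    have hiv : HasFDerivAt (fun z => ((inner ℝ (B z) (B z) : ℝ))⁻¹)
        ((-(((inner ℝ (B y) (B y) : ℝ))^2)⁻¹) •
          ((fderivInnerCLM ℝ (B y, B y)).comp ((fderiv ℝ B y).prod (fderiv ℝ B y)))) y := by
      have := (hasDerivAt_inv (hinner_ne y)).comp_hasFDerivAt y hφ
      simpa [Function.comp_def] using this
    have hG' : HasFDerivAt G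
        (((inner ℝ (B y) (B y) : ℝ))⁻¹ • (fderiv ℝ B y)
          + ((-(((inner ℝ (B y) (B y) : ℝ))^2)⁻¹) •
              ((fderivInnerCLM ℝ (B y, B y)).comp
                ((fderiv ℝ B y).prod (fderiv ℝ B y)))).smulRight (B y)) y :=
      hiv.smul (hBdiff y).hasFDerivAt
    rw [hG'.fderiv]
    have hb := hBnorm_pos y
    have hby : ‖B y‖⁻¹ ≤ c0 * (1 + ‖y‖ ^ γ) := hinv y
    have e1 : ‖((inner ℝ (B y) (B y) : ℝ))⁻¹ • (fderiv ℝ B y)‖ ≤ (‖B y‖^2)⁻¹ * M1 := by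
      rw [norm_smul, Real.norm_eq_abs, hinner_eq, abs_of_nonneg (by positivity)]
      exact mul_le_mul_of_nonneg_left (hM1' y) (by positivity)
    have e2 : ‖((-(((inner ℝ (B y) (B y) : ℝ))^2)⁻¹) •
        ((fderivInnerCLM ℝ (B y, B y)).comp
          ((fderiv ℝ B y).prod (fderiv ℝ B y)))).smulRight (B y)‖
        ≤ ((‖B y‖^2)^2)⁻¹ * (2 * M1 * ‖B y‖) * ‖B y‖ := by
      rw [ContinuousLinearMap.norm_smulRight_apply]
      apply mul_le_mul_of_nonneg_right _ (norm_nonneg _)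
      rw [norm_smul, Real.norm_eq_abs, hinner_eq, abs_neg, abs_of_nonneg (by positivity)]
      exact mul_le_mul_of_nonneg_left hDφ_bound (by positivity)
    calc ‖((inner ℝ (B y) (B y) : ℝ))⁻¹ • (fderiv ℝ B y)
          + ((-(((inner ℝ (B y) (B y) : ℝ))^2)⁻¹) •
              ((fderivInnerCLM ℝ (B y, B y)).comp
                ((fderiv ℝ B y).prod (fderiv ℝ B y)))).smulRight (B y)‖
        ≤ (‖B y‖^2)⁻¹ * M1 + ((‖B y‖^2)^2)⁻¹ * (2 * M1 * ‖B y‖) * ‖B y‖ :=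
          le_trans (norm_add_le _ _) (add_le_add e1 e2)
      _ = 3 * M1 * (‖B y‖⁻¹)^2 := by field_simp <;> ring
      _ ≤ 3 * M1 * (c0 * (1 + ‖y‖ ^ γ))^2 := by
          have h0 : (0:ℝ) ≤ ‖B y‖⁻¹ := inv_nonneg.mpr (norm_nonneg _)
          have h2 : (‖B y‖⁻¹)^2 ≤ (c0 * (1 + ‖y‖ ^ γ))^2 := by
            apply pow_le_pow_left₀ h0 hby
          exact mul_le_mul_of_nonneg_left h2 (by linarith)
  -- constants
  obtain ⟨K, hKdef⟩ : ∃ K : ℝ, K = ‖x₀‖ := ⟨_, rfl⟩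
  obtain ⟨V, hVdef⟩ : ∃ V : ℝ, V = ‖v₀‖ := ⟨_, rfl⟩
  have hK0 : 0 ≤ K := hKdef ▸ norm_nonneg _
  have hV0 : 0 ≤ V := hVdef ▸ norm_nonneg _
  obtain ⟨D, hDdef⟩ : ∃ D : ℝ, D = 1 + (K + V) ^ γ := ⟨_, rfl⟩
  have hD1 : 1 ≤ D := by
    have : (0:ℝ) ≤ (K+V)^γ := Real.rpow_nonneg (by positivity) _
    rw [hDdef]; linarith
  have hD0 : 0 < D := lt_of_lt_of_le one_pos hD1
  obtain ⟨Cfin, hCdef⟩ : ∃ Cfin : ℝ,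
      Cfin = (2 * c0 * D * V + 3 * M1 * c0^2 * D^2 * V^2 + 1) * 2 ^ (2*γ+1) := ⟨_, rfl⟩
  have h2pow : (0:ℝ) < 2 ^ (2*γ+1) := Real.rpow_pos_of_pos (by norm_num) _
  have hCpos : 0 < Cfin := by
    have h1 : (0:ℝ) < 2 * c0 * D * V + 3 * M1 * c0^2 * D^2 * V^2 + 1 := by positivity
    rw [hCdef]; positivity
  refine ⟨Cfin, hCpos, ?_⟩
  intro t ht ω hω
  obtain ⟨hx0, hv0, hxdiff, hvd⟩ := hxω ω hω
  set x : ℝ → E3 := xω ω with hxdef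
  set v : ℝ → E3 := deriv x with hvdef
  set a : ℝ → E3 := fun s => ω • cross3 (v s) (B (x s)) with hadef
  have hx' : ∀ s : ℝ, HasDerivAt x (v s) s := fun s => (hxdiff s).hasDerivAt
  have hvd' : ∀ s : ℝ, HasDerivAt v (a s) s := hvd
  have hvdiff : Differentiable ℝ v := fun s => (hvd' s).differentiableAt
  have hvcont : Continuous v := hvdiff.continuous
  have hxcont : Continuous x := hxdiff.continuous
  have hcross_cont : ∀ (f h : ℝ → E3), Continuous f → Continuous h →
      Continuous (fun s => cross3 (f s) (h s)) := by
    intro f h hf hh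
    have : Continuous (fun s => (crossCLM (f s)) (h s)) :=
      (crossCLM.continuous.comp hf).clm_apply hh
    simpa using this
  have hacont : Continuous a :=
    (hcross_cont v (fun s => B (x s)) hvcont (hB2.continuous.comp hxcont)).const_smul ω
  -- speed conservation
  have hspeed : ∀ s : ℝ, ‖v s‖ = V := by
    have hf : ∀ s : ℝ, HasDerivAt (fun u => (inner ℝ (v u) (v u) : ℝ)) 0 s := by
      intro s
      have h := (hvd' s).inner ℝ (hvd' s)
      have h1 : (inner ℝ (a s) (v s) : ℝ) = 0 := by
        show (inner ℝ (ω • cross3 (v s) (B (x s))) (v s) : ℝ) = 0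
        rw [real_inner_smul_left, inner_cross3_self, mul_zero]
      have h2 : (inner ℝ (v s) (a s) : ℝ) = 0 := by
        show (inner ℝ (v s) (ω • cross3 (v s) (B (x s))) : ℝ) = 0
        rw [real_inner_smul_right, inner_self_cross3, mul_zero]
      rw [h2, h1, add_zero] at h
      exact h
    have hconst : ∀ s : ℝ, (inner ℝ (v s) (v s) : ℝ) = (inner ℝ (v 0) (v 0) : ℝ) := by
      intro s
      exact is_const_of_deriv_eq_zero (fun u => (hf u).differentiableAt)
        (fun u => (hf u).deriv) s 0
    intro s
    have h2 := hconst s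
    rw [real_inner_self_eq_norm_sq, real_inner_self_eq_norm_sq] at h2
    have h3 := congrArg Real.sqrt h2
    rw [Real.sqrt_sq (norm_nonneg _), Real.sqrt_sq (norm_nonneg _)] at h3
    rw [h3, hVdef]
    exact congrArg norm hv0
  -- position bound
  have hxb : ∀ s ∈ Set.Icc (0:ℝ) t, ‖x s‖ ≤ K + V * t := by
    intro s hs
    have h0m : (0:ℝ) ∈ Set.Icc (0:ℝ) t := ⟨le_rfl, ht⟩
    have hseg : ‖x s - x 0‖ ≤ V * ‖s - 0‖ :=
      (convex_Icc (0:ℝ) t).norm_image_sub_le_of_norm_hasDerivWithin_le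
        (fun u _ => (hx' u).hasDerivWithinAt)
        (fun u _ => (hspeed u).le) h0m hs
    have hs0 : ‖s - (0:ℝ)‖ ≤ t := by
      rw [sub_zero, Real.norm_eq_abs, abs_of_nonneg hs.1]; exact hs.2
    calc ‖x s‖ ≤ ‖x 0‖ + ‖x s - x 0‖ := by
          have he : x s = x 0 + (x s - x 0) := by abel
          calc ‖x s‖ = ‖x 0 + (x s - x 0)‖ := by rw [← he]
            _ ≤ ‖x 0‖ + ‖x s - x 0‖ := norm_add_le _ _
      _ ≤ K + V * t := by
          have h5 : V * ‖s - 0‖ ≤ V * t := mul_le_mul_of_nonneg_left hs0 hV0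
          have h6 : ‖x 0‖ = K := by rw [hx0, hKdef]
          linarith [hseg, h5, h6]
  -- pointwise growth bound along trajectory
  obtain ⟨P, hPdef⟩ : ∃ P : ℝ, P = 1 + (K + V * t) ^ γ := ⟨_, rfl⟩
  have hKVt : (0:ℝ) ≤ K + V * t := by
    have := mul_nonneg hV0 ht; linarith
  have hP1 : ∀ s ∈ Set.Icc (0:ℝ) t, 1 + ‖x s‖ ^ γ ≤ P := by
    intro s hs
    have := Real.rpow_le_rpow (norm_nonneg _) (hxb s hs) hγ
    rw [hPdef]; linarith
  have hP0 : 0 < P := by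
    have : (0:ℝ) ≤ (K + V * t) ^ γ := Real.rpow_nonneg hKVt _
    rw [hPdef]; linarith
  have hone_le : (1:ℝ) ≤ 1 + t := by linarith
  have hPD : P ≤ D * (1 + t) ^ γ := by
    have h1 : K + V * t ≤ (K + V) * (1 + t) := by nlinarith
    have h2 : (K + V * t) ^ γ ≤ ((K + V) * (1 + t)) ^ γ :=
      Real.rpow_le_rpow (by positivity) h1 hγ
    rw [Real.mul_rpow (by positivity) (by linarith)] at h2
    have h3 : (1:ℝ) ≤ (1 + t) ^ γ := Real.one_le_rpow hone_le hγ
    have h4 : (0:ℝ) ≤ (K + V) ^ γ := Real.rpow_nonneg (by positivity) _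
    rw [hPdef, hDdef]
    nlinarith
  -- the integrand identity and integration by parts
  set g : ℝ → E3 := fun s => G (x s) with hgdef
  have hg' : ∀ s : ℝ, HasDerivAt g (fderiv ℝ G (x s) (v s)) s := by
    intro s
    have := (hGdiff (x s)).hasFDerivAt.comp_hasDerivAt s (hx' s)
    simpa [Function.comp_def, hgdef] using this
  have hgcont : Continuous g := (hGcd.continuous.comp hxcont)
  set q2 : ℝ → E3 := fun s => cross3 (fderiv ℝ G (x s) (v s)) (v s) with hq2def
  set H : ℝ → E3 := fun s => cross3 (g s) (v s) with hHdef
  have hH : ∀ s : ℝ, HasDerivAt H (q2 s + cross3 (g s) (a s)) s := by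
    intro s
    have h1 : HasDerivAt (fun u => crossCLM (g u)) (crossCLM (fderiv ℝ G (x s) (v s))) s := by
      have := crossCLM.hasFDerivAt.comp_hasDerivAt s (hg' s)
      simpa [Function.comp_def] using this
    have h2 := h1.clm_apply (hvd' s)
    simpa [hHdef, hq2def] using h2
  have hq2cont : Continuous q2 := by
    apply hcross_cont _ _ _ hvcont
    exact ((hfderivG_cont.comp hxcont).clm_apply hvcont)
  have hgacont : Continuous (fun s => cross3 (g s) (a s)) := hcross_cont _ _ hgcont hacont
  have hint2 : IntervalIntegrable q2 volume 0 t := hq2cont.intervalIntegrable _ _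
  have hint1 : IntervalIntegrable (fun s => q2 s + cross3 (g s) (a s)) volume 0 t :=
    (hq2cont.add hgacont).intervalIntegrable _ _
  have hFTC : (∫ s in (0:ℝ)..t, (q2 s + cross3 (g s) (a s))) = H t - H 0 :=
    intervalIntegral.integral_eq_sub_of_hasDerivAt (fun s _ => hH s) hint1
  -- pointwise identity
  have hpt : ∀ s : ℝ, v s - (inner ℝ (v s) (bdir B (x s)) : ℝ) • bdir B (x s)
      = ω⁻¹ • cross3 (g s) (a s) := by
    intro s
    rw [perp_eq_cross B (x s) (v s) (hB0 _)]
    have : cross3 (g s) (a s) = ω • cross3 (g s) (cross3 (v s) (B (x s))) := by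
      rw [hadef]
      exact cross3_smul_right ω (g s) _
    rw [this, smul_smul, inv_mul_cancel₀ hω.ne', one_smul]
  -- compute the integral
  have hEq : (∫ s in (0:ℝ)..t,
      (v s - (inner ℝ (v s) (bdir B (x s)) : ℝ) • bdir B (x s)))
      = ω⁻¹ • (H t - H 0 - ∫ s in (0:ℝ)..t, q2 s) := by
    rw [intervalIntegral.integral_congr (g := fun s => ω⁻¹ • cross3 (g s) (a s))
      (fun s _ => hpt s)]
    rw [intervalIntegral.integral_smul]
    congr 1
    have h2 : ∀ s : ℝ, cross3 (g s) (a s) = (q2 s + cross3 (g s) (a s)) - q2 s := by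
      intro s; abel
    rw [intervalIntegral.integral_congr (g := fun s => (q2 s + cross3 (g s) (a s)) - q2 s)
      (fun s _ => h2 s)]
    rw [intervalIntegral.integral_sub hint1 hint2, hFTC]
  -- norm bounds
  have hHs : ∀ s ∈ Set.Icc (0:ℝ) t, ‖H s‖ ≤ c0 * (D * (1 + t) ^ γ) * V := by
    intro s hs
    have h1 : ‖H s‖ ≤ ‖g s‖ * ‖v s‖ := norm_cross3_le _ _
    have h2 : ‖g s‖ = ‖B (x s)‖⁻¹ := hGnorm (x s)
    have h3 : ‖B (x s)‖⁻¹ ≤ c0 * (1 + ‖x s‖ ^ γ) := hinv (x s)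
    have h4 : c0 * (1 + ‖x s‖ ^ γ) ≤ c0 * P :=
      mul_le_mul_of_nonneg_left (hP1 s hs) hc0pos.le
    have h5 : c0 * P ≤ c0 * (D * (1 + t) ^ γ) :=
      mul_le_mul_of_nonneg_left hPD hc0pos.le
    calc ‖H s‖ ≤ ‖g s‖ * ‖v s‖ := h1
      _ = ‖B (x s)‖⁻¹ * V := by rw [h2, hspeed s]
      _ ≤ (c0 * (D * (1 + t) ^ γ)) * V := by
          apply mul_le_mul_of_nonneg_right _ hV0
          exact le_trans h3 (le_trans h4 h5)
  have hq2b : ∀ s ∈ Set.Icc (0:ℝ) t,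
      ‖q2 s‖ ≤ 3 * M1 * (c0 * P)^2 * V^2 := by
    intro s hs
    have h1 : ‖q2 s‖ ≤ ‖fderiv ℝ G (x s) (v s)‖ * ‖v s‖ := norm_cross3_le _ _
    have h2 : ‖fderiv ℝ G (x s) (v s)‖ ≤ ‖fderiv ℝ G (x s)‖ * ‖v s‖ :=
      ContinuousLinearMap.le_opNorm _ _
    have h3 : ‖fderiv ℝ G (x s)‖ ≤ 3 * M1 * (c0 * (1 + ‖x s‖ ^ γ))^2 := hDG (x s)
    have h4 : (c0 * (1 + ‖x s‖ ^ γ))^2 ≤ (c0 * P)^2 := by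
      apply pow_le_pow_left₀ (mul_nonneg hc0pos.le (by positivity))
      exact mul_le_mul_of_nonneg_left (hP1 s hs) hc0pos.le
    calc ‖q2 s‖ ≤ ‖fderiv ℝ G (x s)‖ * ‖v s‖ * ‖v s‖ := by
          calc ‖q2 s‖ ≤ ‖fderiv ℝ G (x s) (v s)‖ * ‖v s‖ := h1
            _ ≤ (‖fderiv ℝ G (x s)‖ * ‖v s‖) * ‖v s‖ :=
                mul_le_mul_of_nonneg_right h2 (norm_nonneg _)
      _ = ‖fderiv ℝ G (x s)‖ * V^2 := by rw [hspeed s]; ring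
      _ ≤ 3 * M1 * (c0 * P)^2 * V^2 := by
          apply mul_le_mul_of_nonneg_right _ (sq_nonneg V)
          refine le_trans h3 ?_
          exact mul_le_mul_of_nonneg_left h4 (by linarith)
  have hIq2 : ‖∫ s in (0:ℝ)..t, q2 s‖ ≤ 3 * M1 * (c0 * P)^2 * V^2 * t := by
    have := intervalIntegral.norm_integral_le_of_norm_le_const
      (C := 3 * M1 * (c0 * P)^2 * V^2) (f := q2) (a := (0:ℝ)) (b := t) ?_
    · calc ‖∫ s in (0:ℝ)..t, q2 s‖ ≤ 3 * M1 * (c0 * P)^2 * V^2 * |t - 0| := this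
        _ = 3 * M1 * (c0 * P)^2 * V^2 * t := by
            rw [sub_zero, abs_of_nonneg ht]
    · intro s hs
      apply hq2b
      have : Set.uIoc (0:ℝ) t = Set.Ioc 0 t := Set.uIoc_of_le ht
      rw [this] at hs
      exact ⟨hs.1.le, hs.2⟩
  -- final assembly
  rw [hEq, norm_smul, Real.norm_eq_abs, abs_of_pos (inv_pos.mpr hω)]
  have hbody : ‖H t - H 0 - ∫ s in (0:ℝ)..t, q2 s‖
      ≤ 2 * (c0 * (D * (1 + t) ^ γ) * V) + 3 * M1 * (c0 * P)^2 * V^2 * t := by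
    have h1 : ‖H t - H 0 - ∫ s in (0:ℝ)..t, q2 s‖
        ≤ ‖H t‖ + ‖H 0‖ + ‖∫ s in (0:ℝ)..t, q2 s‖ := by
      calc ‖H t - H 0 - ∫ s in (0:ℝ)..t, q2 s‖
          ≤ ‖H t - H 0‖ + ‖∫ s in (0:ℝ)..t, q2 s‖ := norm_sub_le _ _
        _ ≤ ‖H t‖ + ‖H 0‖ + ‖∫ s in (0:ℝ)..t, q2 s‖ := by
            have := norm_sub_le (H t) (H 0); linarith
    have h2 := hHs t ⟨ht, le_rfl⟩
    have h3 := hHs 0 ⟨le_rfl, ht⟩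
    linarith
  -- rpow comparisons
  obtain ⟨W, hWdef⟩ : ∃ W : ℝ, W = (1 + t) ^ (2*γ + 1) := ⟨_, rfl⟩
  have hW1 : (1 + t) ^ γ ≤ W := by
    rw [hWdef]
    exact Real.rpow_le_rpow_of_exponent_le hone_le (by linarith)
  have hW2 : t * (1 + t) ^ (2*γ) ≤ W := by
    have : W = (1 + t) ^ (2*γ) * (1 + t) := by
      rw [hWdef, Real.rpow_add (by linarith : (0:ℝ) < 1 + t), Real.rpow_one]
    rw [this]
    have h1 : (0:ℝ) ≤ (1 + t) ^ (2*γ) := Real.rpow_nonneg (by linarith) _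
    nlinarith
  have hP2 : P^2 ≤ D^2 * (1 + t) ^ (2*γ) := by
    have h1 : P^2 ≤ (D * (1 + t) ^ γ)^2 := pow_le_pow_left₀ hP0.le hPD 2
    have h2 : ((1 + t) ^ γ)^2 = (1 + t) ^ (2*γ) := by
      rw [← Real.rpow_natCast ((1+t) ^ γ) 2, ← Real.rpow_mul (by linarith)]
      norm_num [mul_comm]
    calc P^2 ≤ (D * (1 + t) ^ γ)^2 := h1
      _ = D^2 * (1 + t) ^ (2*γ) := by rw [mul_pow, h2]
  have hWbound : W ≤ 2 ^ (2*γ+1) * (1 + t ^ (2*γ+1)) := hWdef ▸ rpow_helper hγ ht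
  have hWpos : 0 < W := hWdef ▸ Real.rpow_pos_of_pos (by linarith) _
  -- final chain
  have hchain : 2 * (c0 * (D * (1 + t) ^ γ) * V) + 3 * M1 * (c0 * P)^2 * V^2 * t
      ≤ (2 * c0 * D * V + 3 * M1 * c0^2 * D^2 * V^2 + 1) * W := by
    have e1 : 2 * (c0 * (D * (1 + t) ^ γ) * V) ≤ 2 * c0 * D * V * W := by
      have h1 := mul_le_mul_of_nonneg_left hW1
        (by positivity : (0:ℝ) ≤ 2 * c0 * D * V)
      calc 2 * (c0 * (D * (1 + t) ^ γ) * V) = 2 * c0 * D * V * ((1 + t) ^ γ) := by ring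
        _ ≤ 2 * c0 * D * V * W := h1
    have e2 : 3 * M1 * (c0 * P)^2 * V^2 * t ≤ 3 * M1 * c0^2 * D^2 * V^2 * W := by
      have hq := mul_le_mul_of_nonneg_right hP2
        (by positivity : (0:ℝ) ≤ 3 * M1 * c0^2 * V^2 * t)
      have h4 := mul_le_mul_of_nonneg_left hW2
        (by positivity : (0:ℝ) ≤ 3 * M1 * c0^2 * D^2 * V^2)
      calc 3 * M1 * (c0 * P)^2 * V^2 * t
          = P^2 * (3 * M1 * c0^2 * V^2 * t) := by ring
        _ ≤ D^2 * (1 + t) ^ (2*γ) * (3 * M1 * c0^2 * V^2 * t) := hq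
        _ = 3 * M1 * c0^2 * D^2 * V^2 * (t * (1 + t) ^ (2*γ)) := by ring
        _ ≤ 3 * M1 * c0^2 * D^2 * V^2 * W := h4
    have hexp : (2 * c0 * D * V + 3 * M1 * c0^2 * D^2 * V^2 + 1) * W
        = 2 * c0 * D * V * W + 3 * M1 * c0^2 * D^2 * V^2 * W + W := by ring
    linarith [e1, e2, hWpos, hexp]
  have hfinal : ‖H t - H 0 - ∫ s in (0:ℝ)..t, q2 s‖
      ≤ Cfin * (1 + t ^ (2*γ+1)) := by
    have h1 : (2 * c0 * D * V + 3 * M1 * c0^2 * D^2 * V^2 + 1) * W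
        ≤ (2 * c0 * D * V + 3 * M1 * c0^2 * D^2 * V^2 + 1) * (2 ^ (2*γ+1) * (1 + t ^ (2*γ+1))) :=
      mul_le_mul_of_nonneg_left hWbound (by positivity)
    have h2 : (2 * c0 * D * V + 3 * M1 * c0^2 * D^2 * V^2 + 1) * (2 ^ (2*γ+1) * (1 + t ^ (2*γ+1)))
        = Cfin * (1 + t ^ (2*γ+1)) := by rw [hCdef]; ring
    linarith [hbody, hchain]
  calc ω⁻¹ * ‖H t - H 0 - ∫ s in (0:ℝ)..t, q2 s‖
      ≤ ω⁻¹ * (Cfin * (1 + t ^ (2*γ+1))) :=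
        mul_le_mul_of_nonneg_left hfinal (inv_nonneg.mpr hω.le)
    _ = Cfin / ω * (1 + t ^ (2*γ+1)) := by rw [div_eq_mul_inv]; ring
end
end

section
/- Let B ∈ C³ with div(B) = 0 and B(y) ≠ 0 for all y ∈ ℝ³, let Ω ⊂ ℝ³ be a bounded domain with C³ boundary and p ∈ C³(closure Ω) such that B × curl(B) = ∇p in Ω and both B and curl(B) are tangent to ∂Ω. Fix x₀ ∈ Ω and v₀ ∈ ℝ³, and let (x, h) be the unique global solution of the limit system. Then there exists a constant C > 0, independent of t and ω, such that for every ω > 0 and every t ≥ 0 with x_ω(s) ∈ Ω and x(s) ∈ Ω for all s ∈ [0,t]: |p(x_ω(t)) − p(x₀)| ≤ C(1 + t)/ω + (C/ω²) exp(C exp(C t²)); in other words, the pressure along a particle trajectory drifts away from its initial value at worst linearly in time at order 1/ω. -/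
noncomputable section

open Real Filter Topology MeasureTheory intervalIntegral Bornology

set_option maxHeartbeats 2000000

lemma e3_apply (f : Fin 3 → ℝ) (i : Fin 3) :
    ((WithLp.equiv 2 (Fin 3 → ℝ)).symm f : E3) i = f i := rfl

lemma inner_e3 (u w : E3) : (inner ℝ u w : ℝ) = u 0 * w 0 + u 1 * w 1 + u 2 * w 2 := by
  simp [PiLp.inner_apply, Fin.sum_univ_three, RCLike.inner_apply]; ring

lemma cross3_apply0 (u v : E3) : cross3 u v 0 = u 1 * v 2 - u 2 * v 1 := rfl
lemma cross3_apply1 (u v : E3) : cross3 u v 1 = u 2 * v 0 - u 0 * v 2 := rfl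
lemma cross3_apply2 (u v : E3) : cross3 u v 2 = u 0 * v 1 - u 1 * v 0 := rfl

lemma triple_shift (a b c : E3) : (inner ℝ (cross3 a b) c : ℝ) = inner ℝ (cross3 c a) b := by
  simp only [inner_e3, cross3_apply0, cross3_apply1, cross3_apply2]; ring

lemma cross3_self_inner (a b : E3) : (inner ℝ (cross3 a b) a : ℝ) = 0 := by
  simp only [inner_e3, cross3_apply0, cross3_apply1, cross3_apply2]; ring

lemma e3_eq_sum (f : Fin 3 → ℝ) :
    ((WithLp.equiv 2 (Fin 3 → ℝ)).symm f : E3)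
      = f 0 • EuclideanSpace.single (0:Fin 3) (1:ℝ) + f 1 • EuclideanSpace.single 1 (1:ℝ)
        + f 2 • EuclideanSpace.single 2 (1:ℝ) := by
  apply PiLp.ext
  intro i
  fin_cases i <;> simp [e3_apply, EuclideanSpace.single_apply]

lemma cross3_eq_sum (u w : E3) :
    cross3 u w = (u 1 * w 2 - u 2 * w 1) • EuclideanSpace.single (0:Fin 3) (1:ℝ)
      + (u 2 * w 0 - u 0 * w 2) • EuclideanSpace.single 1 (1:ℝ)
      + (u 0 * w 1 - u 1 * w 0) • EuclideanSpace.single 2 (1:ℝ) := by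
  rw [cross3, e3_eq_sum]
  rfl

lemma abs_apply_le_norm (w : E3) (i : Fin 3) : |w i| ≤ ‖w‖ := by
  have h1 : (inner ℝ (EuclideanSpace.single i (1:ℝ)) w : ℝ) = w i := by
    simp [EuclideanSpace.inner_single_left]
  calc |w i| = |(inner ℝ (EuclideanSpace.single i (1:ℝ)) w : ℝ)| := by rw [h1]
    _ ≤ ‖EuclideanSpace.single i (1:ℝ)‖ * ‖w‖ := abs_real_inner_le_norm _ _
    _ = ‖w‖ := by simp [EuclideanSpace.norm_single]

lemma norm_sum3_le (a b c : ℝ) :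
    ‖a • EuclideanSpace.single (0:Fin 3) (1:ℝ) + b • EuclideanSpace.single 1 (1:ℝ)
        + c • EuclideanSpace.single 2 (1:ℝ)‖ ≤ |a| + |b| + |c| := by
  calc ‖a • EuclideanSpace.single (0:Fin 3) (1:ℝ) + b • EuclideanSpace.single 1 (1:ℝ)
        + c • EuclideanSpace.single 2 (1:ℝ)‖
      ≤ ‖a • EuclideanSpace.single (0:Fin 3) (1:ℝ) + b • EuclideanSpace.single 1 (1:ℝ)‖
        + ‖c • EuclideanSpace.single (2:Fin 3) (1:ℝ)‖ := norm_add_le _ _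
    _ ≤ ‖a • EuclideanSpace.single (0:Fin 3) (1:ℝ)‖ + ‖b • EuclideanSpace.single (1:Fin 3) (1:ℝ)‖
        + ‖c • EuclideanSpace.single (2:Fin 3) (1:ℝ)‖ := by
          gcongr; exact norm_add_le _ _
    _ = |a| + |b| + |c| := by
          simp [norm_smul, EuclideanSpace.norm_single]

def ell (a b : Fin 3) : (E3 →L[ℝ] E3) →L[ℝ] ℝ :=
  (EuclideanSpace.proj b).comp (ContinuousLinearMap.apply ℝ E3 (EuclideanSpace.single a 1))

lemma ell_apply (a b : Fin 3) (T : E3 →L[ℝ] E3) :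
    ell a b T = T (EuclideanSpace.single a 1) b := rfl

lemma abs_ell_le (a b : Fin 3) (T : E3 →L[ℝ] E3) : |ell a b T| ≤ ‖T‖ := by
  rw [ell_apply]
  calc |T (EuclideanSpace.single a 1) b| ≤ ‖T (EuclideanSpace.single a 1)‖ :=
        abs_apply_le_norm _ _
    _ ≤ ‖T‖ * ‖EuclideanSpace.single a (1:ℝ)‖ := T.le_opNorm _
    _ = ‖T‖ := by simp [EuclideanSpace.norm_single]

lemma curl3_eq (B : E3 → E3) (y : E3) :
    curl3 B y = (ell 1 2 (fderiv ℝ B y) - ell 2 1 (fderiv ℝ B y)) • EuclideanSpace.single (0:Fin 3) (1:ℝ)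
      + (ell 2 0 (fderiv ℝ B y) - ell 0 2 (fderiv ℝ B y)) • EuclideanSpace.single 1 (1:ℝ)
      + (ell 0 1 (fderiv ℝ B y) - ell 1 0 (fderiv ℝ B y)) • EuclideanSpace.single 2 (1:ℝ) := by
  rw [curl3, e3_eq_sum]
  rfl

theorem pressure_drift_at_worst_linear
    (B : E3 → E3) (hB : IsCkBounded 3 B) (hdiv : ∀ y : E3, divg B y = 0)
    (hB0 : ∀ y : E3, B y ≠ 0)
    -- Ω is a bounded domain with C³ boundary, described by a C³ defining function ρ
    (Ω : Set E3) (hΩo : IsOpen Ω) (hΩc : IsConnected Ω) (hΩb : Bornology.IsBounded Ω)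
    (ρ : E3 → ℝ) (hρ : ContDiff ℝ 3 ρ) (hΩdef : Ω = {y : E3 | ρ y < 0})
    (hρreg : ∀ y ∈ frontier Ω, gradient ρ y ≠ 0)
    -- the pressure is C³ on the closure of Ω and B is a plasma equilibrium
    (p : E3 → ℝ) (hp : ContDiffOn ℝ 3 p (closure Ω))
    (hmhd : ∀ y ∈ Ω, cross3 (B y) (curl3 B y) = gradient p y)
    -- B and curl B are tangent to ∂Ω
    (htanB : ∀ y ∈ frontier Ω, (inner ℝ (B y) (gradient ρ y) : ℝ) = 0)
    (htanJ : ∀ y ∈ frontier Ω, (inner ℝ (curl3 B y) (gradient ρ y) : ℝ) = 0)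
    (x₀ : E3) (hx₀ : x₀ ∈ Ω) (v₀ : E3)
    (x : ℝ → E3) (h : ℝ → ℝ) (hlim : IsLimitSol B x₀ v₀ x h)
    (xω : ℝ → ℝ → E3) (hxω : ∀ ω : ℝ, 0 < ω → IsLorentzSol B ω x₀ v₀ (xω ω)) :
    ∃ C > (0:ℝ), ∀ ω > (0:ℝ), ∀ t ≥ (0:ℝ),
      (∀ s ∈ Set.Icc (0:ℝ) t, xω ω s ∈ Ω ∧ x s ∈ Ω) →
      |p (xω ω t) - p x₀|
        ≤ C * (1 + t) / ω + C / ω ^ 2 * Real.exp (C * Real.exp (C * t ^ 2)) := by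
  obtain ⟨hB3, hBb⟩ := hB
  obtain ⟨M₁, hM₁⟩ := hBb 1 (by norm_num)
  obtain ⟨M₂, hM₂⟩ := hBb 2 (by norm_num)
  have hM₁0 : 0 ≤ M₁ := le_trans (norm_nonneg _) (hM₁ 0)
  have hM₂0 : 0 ≤ M₂ := le_trans (norm_nonneg _) (hM₂ 0)
  -- derivative bounds
  set D : E3 → (E3 →L[ℝ] E3) := fderiv ℝ B with hDdef
  have hD2 : ContDiff ℝ 2 D := hB3.fderiv_right (by norm_num)
  have hDdiff : Differentiable ℝ D := hD2.differentiable (by norm_num)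
  have hDderiv : Continuous (fderiv ℝ D) := (hD2.fderiv_right (m := 1) (by norm_num)).continuous
  have hDcont : Continuous D := hD2.continuous
  have hDnorm : ∀ y, ‖D y‖ ≤ M₁ := by
    intro y
    refine ContinuousLinearMap.opNorm_le_bound _ hM₁0 fun u => ?_
    have h1 : D y u = iteratedFDeriv ℝ 1 B y (fun _ => u) := by
      rw [iteratedFDeriv_one_apply]
    rw [h1]
    calc ‖iteratedFDeriv ℝ 1 B y (fun _ => u)‖
        ≤ ‖iteratedFDeriv ℝ 1 B y‖ * ∏ _i : Fin 1, ‖u‖ :=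
          (iteratedFDeriv ℝ 1 B y).le_opNorm _
      _ = ‖iteratedFDeriv ℝ 1 B y‖ * ‖u‖ := by simp
      _ ≤ M₁ * ‖u‖ := by gcongr; exact hM₁ y
  have hD'norm : ∀ y (u : E3), ‖fderiv ℝ D y u‖ ≤ M₂ * ‖u‖ := by
    intro y u
    have h1 : fderiv ℝ D y u = iteratedFDeriv ℝ 1 D y (fun _ => u) := by
      rw [iteratedFDeriv_one_apply]
    rw [h1]
    calc ‖iteratedFDeriv ℝ 1 D y (fun _ => u)‖
        ≤ ‖iteratedFDeriv ℝ 1 D y‖ * ∏ _i : Fin 1, ‖u‖ :=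
          (iteratedFDeriv ℝ 1 D y).le_opNorm _
      _ = ‖iteratedFDeriv ℝ 1 D y‖ * ‖u‖ := by simp
      _ ≤ M₂ * ‖u‖ := by
          gcongr
          rw [hDdef, norm_iteratedFDeriv_fderiv]
          exact hM₂ y
  -- curl bound
  have hJnorm : ∀ y, ‖curl3 B y‖ ≤ 6 * M₁ := by
    intro y
    rw [curl3_eq]
    refine (norm_sum3_le _ _ _).trans ?_
    have hb : ∀ a b : Fin 3, |ell a b (D y)| ≤ M₁ := fun a b =>
      (abs_ell_le a b (D y)).trans (hDnorm y)
    calc |ell 1 2 (D y) - ell 2 1 (D y)| + |ell 2 0 (D y) - ell 0 2 (D y)|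
          + |ell 0 1 (D y) - ell 1 0 (D y)|
        ≤ (|ell 1 2 (D y)| + |ell 2 1 (D y)|) + (|ell 2 0 (D y)| + |ell 0 2 (D y)|)
          + (|ell 0 1 (D y)| + |ell 1 0 (D y)|) := by
          gcongr <;> exact abs_sub _ _
      _ ≤ (M₁ + M₁) + (M₁ + M₁) + (M₁ + M₁) := by gcongr <;> exact hb _ _
      _ = 6 * M₁ := by ring
  set C : ℝ := 12 * M₁ * ‖v₀‖ + 6 * M₂ * ‖v₀‖ ^ 2 + 1 with hCdef
  have hCpos : (0:ℝ) < C := by positivity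
  refine ⟨C, hCpos, ?_⟩
  intro ω hω t ht hin
  obtain ⟨hx0, hv0, hxdiff, hvderiv⟩ := hxω ω hω
  set xc : ℝ → E3 := xω ω with hxcdef
  set v : ℝ → E3 := deriv (xω ω) with hvdef
  have hxder : ∀ s, HasDerivAt xc (v s) s := fun s => (hxdiff s).hasDerivAt
  have hvd : ∀ s, HasDerivAt v (ω • cross3 (v s) (B (xc s))) s := hvderiv
  have hvdiff : Differentiable ℝ v := fun s => (hvd s).differentiableAt
  have hvcont : Continuous v := hvdiff.continuous
  have hxcont : Continuous xc := hxdiff.continuous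
  -- energy conservation
  have henergy : ∀ s, ‖v s‖ = ‖v₀‖ := by
    have hd : ∀ s, HasDerivAt (fun s => (inner ℝ (v s) (v s) : ℝ)) 0 s := by
      intro s
      have h1 := (hvd s).inner ℝ (hvd s)
      have h2 : (inner ℝ (v s) (ω • cross3 (v s) (B (xc s))) : ℝ)
          + (inner ℝ (ω • cross3 (v s) (B (xc s))) (v s) : ℝ) = 0 := by
        have e1 : (inner ℝ (v s) (cross3 (v s) (B (xc s))) : ℝ) = 0 := by
          rw [real_inner_comm]; exact cross3_self_inner _ _
        have e2 : (inner ℝ (cross3 (v s) (B (xc s))) (v s) : ℝ) = 0 := cross3_self_inner _ _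
        rw [real_inner_smul_right, real_inner_smul_left, e1, e2]; ring
      rwa [h2] at h1
    have hconst : ∀ s, (inner ℝ (v s) (v s) : ℝ) = inner ℝ (v 0) (v 0) := by
      intro s
      exact is_const_of_deriv_eq_zero (fun u => (hd u).differentiableAt)
        (fun u => (hd u).deriv) s 0
    intro s
    have h3 := hconst s
    rw [real_inner_self_eq_norm_sq, real_inner_self_eq_norm_sq] at h3
    have hv0' : v 0 = v₀ := hv0
    rw [hv0'] at h3
    nlinarith [norm_nonneg (v s), norm_nonneg v₀]
  -- coefficient derivatives
  have hcder : ∀ (a b : Fin 3) (s : ℝ),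
      HasDerivAt (fun s => ell a b (D (xc s))) (ell a b (fderiv ℝ D (xc s) (v s))) s := by
    intro a b s
    have h1 : HasFDerivAt (fun y => ell a b (D y)) ((ell a b).comp (fderiv ℝ D (xc s))) (xc s) :=
      (ell a b).hasFDerivAt.comp _ (hDdiff _).hasFDerivAt
    exact h1.comp_hasDerivAt s (hxder s)
  have hccont : ∀ (a b : Fin 3), Continuous fun s => ell a b (fderiv ℝ D (xc s) (v s)) := by
    intro a b
    exact (ell a b).continuous.comp ((hDderiv.comp hxcont).clm_apply hvcont)
  have hccont0 : ∀ (a b : Fin 3), Continuous fun s => ell a b (D (xc s)) := by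
    intro a b
    exact (ell a b).continuous.comp (hDcont.comp hxcont)
  -- J along the trajectory and its derivative
  set Jc : ℝ → E3 := fun s => curl3 B (xc s) with hJcdef
  set Dc : ℝ → E3 := fun s =>
    (ell 1 2 (fderiv ℝ D (xc s) (v s)) - ell 2 1 (fderiv ℝ D (xc s) (v s))) • EuclideanSpace.single (0:Fin 3) (1:ℝ)
      + (ell 2 0 (fderiv ℝ D (xc s) (v s)) - ell 0 2 (fderiv ℝ D (xc s) (v s))) • EuclideanSpace.single 1 (1:ℝ)
      + (ell 0 1 (fderiv ℝ D (xc s) (v s)) - ell 1 0 (fderiv ℝ D (xc s) (v s))) • EuclideanSpace.single 2 (1:ℝ)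
    with hDcdef
  have hJder : ∀ s, HasDerivAt Jc (Dc s) s := by
    intro s
    have : Jc = fun s =>
        (ell 1 2 (D (xc s)) - ell 2 1 (D (xc s))) • EuclideanSpace.single (0:Fin 3) (1:ℝ)
        + (ell 2 0 (D (xc s)) - ell 0 2 (D (xc s))) • EuclideanSpace.single 1 (1:ℝ)
        + (ell 0 1 (D (xc s)) - ell 1 0 (D (xc s))) • EuclideanSpace.single 2 (1:ℝ) := by
      funext u; rw [hJcdef]; exact curl3_eq B (xc u)
    rw [this, hDcdef]
    exact ((((hcder 1 2 s).sub (hcder 2 1 s)).smul_const _).add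
      (((hcder 2 0 s).sub (hcder 0 2 s)).smul_const _)).add
      (((hcder 0 1 s).sub (hcder 1 0 s)).smul_const _)
  have hJccont : Continuous Jc := by
    have : Jc = fun s =>
        (ell 1 2 (D (xc s)) - ell 2 1 (D (xc s))) • EuclideanSpace.single (0:Fin 3) (1:ℝ)
        + (ell 2 0 (D (xc s)) - ell 0 2 (D (xc s))) • EuclideanSpace.single 1 (1:ℝ)
        + (ell 0 1 (D (xc s)) - ell 1 0 (D (xc s))) • EuclideanSpace.single 2 (1:ℝ) := by
      funext u; rw [hJcdef]; exact curl3_eq B (xc u)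
    rw [this]
    exact ((((hccont0 1 2).sub (hccont0 2 1)).smul continuous_const).add
      (((hccont0 2 0).sub (hccont0 0 2)).smul continuous_const)).add
      (((hccont0 0 1).sub (hccont0 1 0)).smul continuous_const)
  have hDccont : Continuous Dc := by
    rw [hDcdef]
    exact ((((hccont 1 2).sub (hccont 2 1)).smul continuous_const).add
      (((hccont 2 0).sub (hccont 0 2)).smul continuous_const)).add
      (((hccont 0 1).sub (hccont 1 0)).smul continuous_const)
  have hDcnorm : ∀ s, ‖Dc s‖ ≤ 6 * M₂ * ‖v₀‖ := by
    intro s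
    have hb : ∀ a b : Fin 3, |ell a b (fderiv ℝ D (xc s) (v s))| ≤ M₂ * ‖v₀‖ := by
      intro a b
      refine (abs_ell_le a b _).trans ?_
      have := hD'norm (xc s) (v s)
      rwa [henergy s] at this
    rw [hDcdef]
    refine (norm_sum3_le _ _ _).trans ?_
    calc |ell 1 2 (fderiv ℝ D (xc s) (v s)) - ell 2 1 (fderiv ℝ D (xc s) (v s))|
          + |ell 2 0 (fderiv ℝ D (xc s) (v s)) - ell 0 2 (fderiv ℝ D (xc s) (v s))|
          + |ell 0 1 (fderiv ℝ D (xc s) (v s)) - ell 1 0 (fderiv ℝ D (xc s) (v s))|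
        ≤ (M₂ * ‖v₀‖ + M₂ * ‖v₀‖) + (M₂ * ‖v₀‖ + M₂ * ‖v₀‖) + (M₂ * ‖v₀‖ + M₂ * ‖v₀‖) := by
          gcongr <;> [skip; skip; skip] <;>
            exact (abs_sub _ _).trans (add_le_add (hb _ _) (hb _ _))
      _ = 6 * M₂ * ‖v₀‖ := by ring
  -- continuity of the forcing term
  have hBc : Continuous fun s => B (xc s) := hB3.continuous.comp hxcont
  have hproj : ∀ (f : ℝ → E3), Continuous f → ∀ i : Fin 3, Continuous fun s => f s i := by
    intro f hf i
    exact (EuclideanSpace.proj (𝕜 := ℝ) i).continuous.comp hf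
  have hcrossc : ∀ (f g : ℝ → E3), Continuous f → Continuous g →
      Continuous fun s => cross3 (f s) (g s) := by
    intro f g hf hg
    have : (fun s => cross3 (f s) (g s)) = fun s =>
        (f s 1 * g s 2 - f s 2 * g s 1) • EuclideanSpace.single (0:Fin 3) (1:ℝ)
        + (f s 2 * g s 0 - f s 0 * g s 2) • EuclideanSpace.single 1 (1:ℝ)
        + (f s 0 * g s 1 - f s 1 * g s 0) • EuclideanSpace.single 2 (1:ℝ) := by
      funext u; exact cross3_eq_sum _ _
    rw [this]
    exact (((((hproj f hf 1).mul (hproj g hg 2)).sub ((hproj f hf 2).mul (hproj g hg 1))).smul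
        continuous_const).add
      ((((hproj f hf 2).mul (hproj g hg 0)).sub ((hproj f hf 0).mul (hproj g hg 2))).smul
        continuous_const)).add
      ((((hproj f hf 0).mul (hproj g hg 1)).sub ((hproj f hf 1).mul (hproj g hg 0))).smul
        continuous_const)
  set v' : ℝ → E3 := fun s => ω • cross3 (v s) (B (xc s)) with hv'def
  have hv'c : Continuous v' := (hcrossc _ _ hvcont hBc).const_smul ω
  -- the integrand
  set φ : ℝ → ℝ := fun s => (inner ℝ (cross3 (B (xc s)) (Jc s)) (v s) : ℝ) with hφdef
  have hφcont : Continuous φ := (hcrossc _ _ hBc hJccont).inner hvcont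
  -- FTC for the pressure along the trajectory
  have hPder : ∀ s ∈ Set.uIcc (0:ℝ) t, HasDerivAt (fun s => p (xc s)) (φ s) s := by
    intro s hs
    rw [Set.uIcc_of_le ht] at hs
    have hmem := (hin s hs).1
    have hpd : DifferentiableAt ℝ p (xc s) :=
      (hp.differentiableOn (by norm_num)).differentiableAt
        (Filter.mem_of_superset (hΩo.mem_nhds hmem) subset_closure)
    have h1 := hpd.hasGradientAt.hasFDerivAt.comp_hasDerivAt s (hxder s)
    have h2 : (InnerProductSpace.toDual ℝ E3 (gradient p (xc s))) (v s) = φ s := by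
      rw [InnerProductSpace.toDual_apply_apply, hφdef, ← hmhd _ hmem]
    rwa [h2] at h1
  have hintφ : IntervalIntegrable φ volume 0 t := hφcont.intervalIntegrable _ _
  have hA : ∫ s in (0:ℝ)..t, φ s = p (xc t) - p (xc 0) :=
    integral_eq_sub_of_hasDerivAt hPder hintφ
  -- FTC for G := ⟪v, J(x)⟫
  set G : ℝ → ℝ := fun s => (inner ℝ (v s) (Jc s) : ℝ) with hGdef
  have hGder : ∀ s, HasDerivAt G ((inner ℝ (v s) (Dc s) : ℝ) + (inner ℝ (v' s) (Jc s) : ℝ)) s :=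
    fun s => (hvd s).inner ℝ (hJder s)
  have hintvDc : IntervalIntegrable (fun s => (inner ℝ (v s) (Dc s) : ℝ)) volume 0 t :=
    (hvcont.inner hDccont).intervalIntegrable _ _
  have hintv'Jc : IntervalIntegrable (fun s => (inner ℝ (v' s) (Jc s) : ℝ)) volume 0 t :=
    (hv'c.inner hJccont).intervalIntegrable _ _
  have hFTCB : ∫ s in (0:ℝ)..t, ((inner ℝ (v s) (Dc s) : ℝ) + (inner ℝ (v' s) (Jc s) : ℝ))
      = G t - G 0 :=
    integral_eq_sub_of_hasDerivAt (fun s _ => hGder s) (hintvDc.add hintv'Jc)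
  have hsplit : ∫ s in (0:ℝ)..t, ((inner ℝ (v s) (Dc s) : ℝ) + (inner ℝ (v' s) (Jc s) : ℝ))
      = (∫ s in (0:ℝ)..t, (inner ℝ (v s) (Dc s) : ℝ))
        + ∫ s in (0:ℝ)..t, (inner ℝ (v' s) (Jc s) : ℝ) :=
    intervalIntegral.integral_add hintvDc hintv'Jc
  -- pointwise identity
  have hφeq : ∀ s, φ s = ω⁻¹ * (inner ℝ (v' s) (Jc s) : ℝ) := by
    intro s
    have h1 : φ s = (inner ℝ (cross3 (v s) (B (xc s))) (Jc s) : ℝ) := triple_shift _ _ _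
    have h2 : (inner ℝ (v' s) (Jc s) : ℝ) = ω * (inner ℝ (cross3 (v s) (B (xc s))) (Jc s) : ℝ) :=
      real_inner_smul_left _ _ _
    rw [h1, h2, ← mul_assoc, inv_mul_cancel₀ (ne_of_gt hω), one_mul]
  have hφint : ∫ s in (0:ℝ)..t, φ s
      = ω⁻¹ * ∫ s in (0:ℝ)..t, (inner ℝ (v' s) (Jc s) : ℝ) := by
    simp_rw [hφeq]
    rw [intervalIntegral.integral_const_mul]
  -- bounds
  have hGb : ∀ s, |G s| ≤ ‖v₀‖ * (6 * M₁) := by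
    intro s
    calc |G s| ≤ ‖v s‖ * ‖Jc s‖ := abs_real_inner_le_norm _ _
      _ = ‖v₀‖ * ‖Jc s‖ := by rw [henergy]
      _ ≤ ‖v₀‖ * (6 * M₁) := by gcongr; exact hJnorm _
  have hIb : |∫ s in (0:ℝ)..t, (inner ℝ (v s) (Dc s) : ℝ)| ≤ ‖v₀‖ * (6 * M₂ * ‖v₀‖) * |t - 0| := by
    have := intervalIntegral.norm_integral_le_of_norm_le_const
      (C := ‖v₀‖ * (6 * M₂ * ‖v₀‖)) (f := fun s => (inner ℝ (v s) (Dc s) : ℝ)) (a := (0:ℝ)) (b := t) ?_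
    · simpa using this
    · intro s _
      rw [Real.norm_eq_abs]
      calc |(inner ℝ (v s) (Dc s) : ℝ)| ≤ ‖v s‖ * ‖Dc s‖ := abs_real_inner_le_norm _ _
        _ = ‖v₀‖ * ‖Dc s‖ := by rw [henergy]
        _ ≤ ‖v₀‖ * (6 * M₂ * ‖v₀‖) := by gcongr; exact hDcnorm _
  -- assembly
  have key : p (xω ω t) - p x₀
      = ω⁻¹ * ((G t - G 0) - ∫ s in (0:ℝ)..t, (inner ℝ (v s) (Dc s) : ℝ)) := by
    calc p (xω ω t) - p x₀ = p (xc t) - p (xc 0) := by rw [hx0]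
      _ = ∫ s in (0:ℝ)..t, φ s := hA.symm
      _ = ω⁻¹ * ∫ s in (0:ℝ)..t, (inner ℝ (v' s) (Jc s) : ℝ) := hφint
      _ = ω⁻¹ * ((G t - G 0) - ∫ s in (0:ℝ)..t, (inner ℝ (v s) (Dc s) : ℝ)) := by
          rw [← hFTCB, hsplit]; ring
  have habs : |p (xω ω t) - p x₀|
      ≤ ω⁻¹ * (12 * M₁ * ‖v₀‖ + 6 * M₂ * ‖v₀‖ ^ 2 * t) := by
    rw [key, abs_mul, abs_of_nonneg (inv_nonneg.mpr (le_of_lt hω))]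
    gcongr
    have h0 : |t - 0| = t := by rw [sub_zero, abs_of_nonneg ht]
    calc |(G t - G 0) - ∫ s in (0:ℝ)..t, (inner ℝ (v s) (Dc s) : ℝ)|
        ≤ |G t - G 0| + |∫ s in (0:ℝ)..t, (inner ℝ (v s) (Dc s) : ℝ)| := abs_sub _ _
      _ ≤ (|G t| + |G 0|) + ‖v₀‖ * (6 * M₂ * ‖v₀‖) * |t - 0| :=
          add_le_add (abs_sub _ _) hIb
      _ ≤ (‖v₀‖ * (6 * M₁) + ‖v₀‖ * (6 * M₁)) + ‖v₀‖ * (6 * M₂ * ‖v₀‖) * t := by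
          rw [h0]; gcongr <;> [exact hGb t; exact hGb 0]
      _ = 12 * M₁ * ‖v₀‖ + 6 * M₂ * ‖v₀‖ ^ 2 * t := by ring
  refine habs.trans ?_
  have hineq : ω⁻¹ * (12 * M₁ * ‖v₀‖ + 6 * M₂ * ‖v₀‖ ^ 2 * t) ≤ C * (1 + t) / ω := by
    rw [div_eq_inv_mul]
    gcongr
    have hnv : (0:ℝ) ≤ ‖v₀‖ := norm_nonneg _
    nlinarith [mul_nonneg hM₂0 (mul_nonneg (mul_nonneg hnv hnv) ht),
      mul_nonneg hM₁0 hnv]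
  refine hineq.trans ?_
  have : (0:ℝ) ≤ C / ω ^ 2 * Real.exp (C * Real.exp (C * t ^ 2)) := by positivity
  linarith
end
end
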